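/- Let m = 5, p ≥ 1, and q ∈ ℕ. Let f be a vertex function on C_5^N supported in Σ_{p,q}, and let B denote the internal outer subadjacency B g = 𝟙_{Σ_{p−1,q+1}} · (A_+ g). Then for every vertex w, (A_0 (B f))(w) − (B (A_0 f))(w) = Σ_{ν : d_ν(w) = 2} f((w_ν^-)~_ν), where (w_ν^-)~_ν denotes the ν-reflection of the vertex w_ν^-; that is, the commutator [A_0, B] acts as the twisted outer adjacency on functions supported in Σ_{p,q}. -/
import Mathlib


open Finset

/-- The standard generator `e_k` of `(ZMod m)^N`: equal to `1` in coordinate `k`,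
`0` elsewhere. -/
def eV (N m : ℕ) (k : Fin N) : Fin N → ZMod m :=
  fun j => if j = k then 1 else 0

/-- Adjacency in the Cayley graph `C_m^N`: `v ∼ w` iff `w = v + e_k` or `w = v - e_k`
for some coordinate `k`. -/
def adj (N m : ℕ) (v w : Fin N → ZMod m) : Prop :=
  ∃ k : Fin N, w = v + eV N m k ∨ w = v - eV N m k

/-- The `k`-th level of a vertex: `d_k(v) = min((v k).val, m - (v k).val)`. -/
def lev (N m : ℕ) (v : Fin N → ZMod m) (k : Fin N) : ℕ :=
  min ((v k).val) (m - (v k).val)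

/-- Path distance of a vertex to the origin: `d(v) = Σ_k d_k(v)`. -/
def distO (N m : ℕ) (v : Fin N → ZMod m) : ℕ :=
  ∑ k : Fin N, lev N m v k

open Classical in
/-- Adjacency operator: `(A f)(v) = Σ_{w ∼ v} f(w)`. -/
noncomputable def Aop (N m : ℕ) [NeZero m] (f : (Fin N → ZMod m) → ℂ) :
    (Fin N → ZMod m) → ℂ :=
  fun v => ∑ w : Fin N → ZMod m, if adj N m v w then f w else 0

open Classical in
/-- Outer adjacency: `(A₊ f)(v) = Σ_{w ∼ v, d(w) < d(v)} f(w)`. -/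
noncomputable def Aplus (N m : ℕ) [NeZero m] (f : (Fin N → ZMod m) → ℂ) :
    (Fin N → ZMod m) → ℂ :=
  fun v => ∑ w : Fin N → ZMod m,
    if adj N m v w ∧ distO N m w < distO N m v then f w else 0

open Classical in
/-- Inner adjacency: `(A₋ f)(v) = Σ_{w ∼ v, d(w) > d(v)} f(w)`. -/
noncomputable def Aminus (N m : ℕ) [NeZero m] (f : (Fin N → ZMod m) → ℂ) :
    (Fin N → ZMod m) → ℂ :=
  fun v => ∑ w : Fin N → ZMod m,
    if adj N m v w ∧ distO N m v < distO N m w then f w else 0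

open Classical in
/-- Neutral adjacency: `(A₀ f)(v) = Σ_{w ∼ v, d(w) = d(v)} f(w)`. -/
noncomputable def Azero (N m : ℕ) [NeZero m] (f : (Fin N → ZMod m) → ℂ) :
    (Fin N → ZMod m) → ℂ :=
  fun v => ∑ w : Fin N → ZMod m,
    if adj N m v w ∧ distO N m w = distO N m v then f w else 0

/-- The `k`-reflection `ṽ_k` of a vertex: negate the `k`-th coordinate. -/
def reflV (N m : ℕ) (k : Fin N) (v : Fin N → ZMod m) : Fin N → ZMod m :=
  Function.update v k (-(v k))

/-- Level-one reflection sum: `(R₁ f)(v) = Σ_{k : d_k(v) = 1} f(ṽ_k)`. -/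
noncomputable def R1 (N m : ℕ) (f : (Fin N → ZMod m) → ℂ) :
    (Fin N → ZMod m) → ℂ :=
  fun v => ∑ k ∈ Finset.univ.filter (fun k => lev N m v k = 1), f (reflV N m k v)

/-- Number of coordinates of `v` at level `ℓ`. -/
def cardLev (N m : ℕ) (v : Fin N → ZMod m) (ℓ : ℕ) : ℕ :=
  (Finset.univ.filter (fun k => lev N m v k = ℓ)).card

/-- For a vertex `v` of `C_5^N` with `d_ν(v) = 2`, the vertex `v_ν⁻` agreeing with
`v` off coordinate `ν` with level `1` there, of the same sign (value `2` becomes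
`1`; value `3` becomes `4`). -/
def vmin (N : ℕ) (v : Fin N → ZMod 5) (ν : Fin N) : Fin N → ZMod 5 :=
  Function.update v ν (if (v ν).val = 2 then 1 else 4)

open Classical in
/-- The internal outer subadjacency `B g = 𝟙_{Σ_{p-1,q+1}} ⬝ (A₊ g)`. -/
noncomputable def Bop (N p q : ℕ) (g : (Fin N → ZMod 5) → ℂ) :
    (Fin N → ZMod 5) → ℂ :=
  fun v => if cardLev N 5 v 1 + 1 = p ∧ cardLev N 5 v 2 = q + 1
    then Aplus N 5 g v else 0


/-! ### Auxiliary definitions and lemmas -/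

def levVal (a : ZMod 5) : ℕ := min a.val (5 - a.val)

def lowVal (a : ZMod 5) : ZMod 5 := if a.val = 2 then 1 else if a.val = 3 then 4 else 0

def lowV (N : ℕ) (v : Fin N → ZMod 5) (k : Fin N) : Fin N → ZMod 5 :=
  Function.update v k (lowVal (v k))

section Helpers
variable {N : ℕ}

lemma lev_eq (v : Fin N → ZMod 5) (k : Fin N) : lev N 5 v k = levVal (v k) := rfl

lemma lev_le2 (v : Fin N → ZMod 5) (k : Fin N) : lev N 5 v k ≤ 2 := by
  rw [lev_eq]
  exact (by decide : ∀ a : ZMod 5, levVal a ≤ 2) _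

lemma lev_update (v : Fin N → ZMod 5) (k j : Fin N) (b : ZMod 5) :
    lev N 5 (Function.update v k b) j = if j = k then levVal b else lev N 5 v j := by
  by_cases h : j = k
  · subst h; simp [lev_eq, Function.update_self]
  · simp [lev_eq, Function.update_of_ne h, h]

lemma distO_update (v : Fin N → ZMod 5) (k : Fin N) (b : ZMod 5) :
    distO N 5 (Function.update v k b) + lev N 5 v k = distO N 5 v + levVal b := by
  unfold distO
  rw [← Finset.sum_erase_add _ _ (Finset.mem_univ k),
    ← Finset.sum_erase_add _ _ (Finset.mem_univ k)]
  have h1 : ∀ j ∈ Finset.univ.erase k,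
      lev N 5 (Function.update v k b) j = lev N 5 v j := by
    intro j hj
    rw [lev_update, if_neg (Finset.ne_of_mem_erase hj)]
  rw [Finset.sum_congr rfl h1, lev_update, if_pos rfl]
  exact Nat.add_right_comm _ _ _

lemma cardLev_update (v : Fin N → ZMod 5) (k : Fin N) (b : ZMod 5) (l : ℕ) :
    cardLev N 5 (Function.update v k b) l + (if lev N 5 v k = l then 1 else 0)
      = cardLev N 5 v l + (if levVal b = l then 1 else 0) := by
  unfold cardLev
  rw [Finset.card_filter, Finset.card_filter,
    ← Finset.sum_erase_add _ _ (Finset.mem_univ k),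
    ← Finset.sum_erase_add _ _ (Finset.mem_univ k)]
  have h1 : ∀ j ∈ Finset.univ.erase k,
      (if lev N 5 (Function.update v k b) j = l then 1 else 0)
        = (if lev N 5 v j = l then 1 else 0) := by
    intro j hj
    rw [lev_update, if_neg (Finset.ne_of_mem_erase hj)]
  rw [Finset.sum_congr rfl h1, lev_update, if_pos rfl]
  exact Nat.add_right_comm _ _ _

lemma lev_reflV (v : Fin N → ZMod 5) (k j : Fin N) :
    lev N 5 (reflV N 5 k v) j = lev N 5 v j := by
  rw [reflV, lev_update]
  by_cases h : j = k
  · subst h; rw [if_pos rfl, lev_eq]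
    exact (by decide : ∀ a : ZMod 5, levVal (-a) = levVal a) _
  · rw [if_neg h]

lemma cardLev_reflV (v : Fin N → ZMod 5) (k : Fin N) (l : ℕ) :
    cardLev N 5 (reflV N 5 k v) l = cardLev N 5 v l := by
  unfold cardLev
  congr 1
  exact Finset.filter_congr fun j _ => by rw [lev_reflV]

lemma adj_iff (v w : Fin N → ZMod 5) :
    adj N 5 v w ↔ ∃ k, w = Function.update v k (v k + 1)
      ∨ w = Function.update v k (v k - 1) := by
  have h1 : ∀ k : Fin N, v + eV N 5 k = Function.update v k (v k + 1) := by
    intro k; funext j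
    by_cases h : j = k
    · subst h; simp [eV, Function.update_self]
    · simp [eV, h, Function.update_of_ne h]
  have h2 : ∀ k : Fin N, v - eV N 5 k = Function.update v k (v k - 1) := by
    intro k; funext j
    by_cases h : j = k
    · subst h; simp [eV, Function.update_self]
    · simp [eV, h, Function.update_of_ne h]
  unfold adj
  constructor
  · rintro ⟨k, hk | hk⟩
    · exact ⟨k, Or.inl (by rw [hk, h1])⟩
    · exact ⟨k, Or.inr (by rw [hk, h2])⟩
  · rintro ⟨k, hk | hk⟩
    · exact ⟨k, Or.inl (by rw [hk, h1])⟩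
    · exact ⟨k, Or.inr (by rw [hk, h2])⟩

open Classical in
lemma Azero_eq (f : (Fin N → ZMod 5) → ℂ) (v : Fin N → ZMod 5) :
    Azero N 5 f v
      = ∑ k ∈ Finset.univ.filter (fun k => lev N 5 v k = 2), f (reflV N 5 k v) := by
  classical
  rw [Azero]
  rw [← Finset.sum_filter]
  have hinj : ∀ x ∈ Finset.univ.filter (fun k => lev N 5 v k = 2),
      ∀ y ∈ Finset.univ.filter (fun k => lev N 5 v k = 2),
      reflV N 5 x v = reflV N 5 y v → x = y := by
    intro a ha b hb hab
    by_contra hne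
    have h2 : reflV N 5 a v a = reflV N 5 b v a := by rw [hab]
    rw [reflV, reflV, Function.update_self, Function.update_of_ne hne] at h2
    simp only [Finset.mem_filter, Finset.mem_univ, true_and] at ha
    rw [lev_eq] at ha
    exact (by decide : ∀ x : ZMod 5, levVal x = 2 → -x ≠ x) (v a) ha h2
  have hset : Finset.univ.filter (fun w => adj N 5 v w ∧ distO N 5 w = distO N 5 v)
      = (Finset.univ.filter (fun k => lev N 5 v k = 2)).image (fun k => reflV N 5 k v) := by
    ext w
    simp only [Finset.mem_filter, Finset.mem_univ, true_and, Finset.mem_image]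
    constructor
    · rintro ⟨ha, hd⟩
      obtain ⟨k, hk | hk⟩ := (adj_iff v w).1 ha
      · have hdu := distO_update v k (v k + 1)
        rw [← hk, hd, lev_eq v k] at hdu
        have h2 : levVal (v k + 1) = levVal (v k) := by omega
        obtain ⟨h3, h4⟩ := (by decide :
          ∀ a : ZMod 5, levVal (a+1) = levVal a → (levVal a = 2 ∧ a + 1 = -a)) (v k) h2
        exact ⟨k, h3, by rw [hk, h4]; rfl⟩
      · have hdu := distO_update v k (v k - 1)
        rw [← hk, hd, lev_eq v k] at hdu
        have h2 : levVal (v k - 1) = levVal (v k) := by omega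
        obtain ⟨h3, h4⟩ := (by decide :
          ∀ a : ZMod 5, levVal (a-1) = levVal a → (levVal a = 2 ∧ a - 1 = -a)) (v k) h2
        exact ⟨k, h3, by rw [hk, h4]; rfl⟩
    · rintro ⟨k, hk, rfl⟩
      rw [lev_eq] at hk
      obtain ⟨hor, hlv⟩ := (by decide : ∀ a : ZMod 5, levVal a = 2 →
        ((-a = a + 1 ∨ -a = a - 1) ∧ levVal (-a) = levVal a)) (v k) hk
      constructor
      · rw [adj_iff]
        rcases hor with h | h
        · exact ⟨k, Or.inl (by rw [reflV, h])⟩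
        · exact ⟨k, Or.inr (by rw [reflV, h])⟩
      · have := distO_update v k (-(v k))
        rw [hlv, lev_eq v k] at this
        rw [reflV]
        omega
  rw [hset, Finset.sum_image hinj]

open Classical in
lemma Aplus_eq (f : (Fin N → ZMod 5) → ℂ) (v : Fin N → ZMod 5) :
    Aplus N 5 f v
      = ∑ k ∈ Finset.univ.filter (fun k => 1 ≤ lev N 5 v k), f (lowV N v k) := by
  classical
  rw [Aplus]
  rw [← Finset.sum_filter]
  have hinj : ∀ x ∈ Finset.univ.filter (fun k => 1 ≤ lev N 5 v k),
      ∀ y ∈ Finset.univ.filter (fun k => 1 ≤ lev N 5 v k),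
      lowV N v x = lowV N v y → x = y := by
    intro a ha b hb hab
    by_contra hne
    have h2 : lowV N v a a = lowV N v b a := by rw [hab]
    rw [lowV, lowV, Function.update_self, Function.update_of_ne hne] at h2
    simp only [Finset.mem_filter, Finset.mem_univ, true_and] at ha
    rw [lev_eq] at ha
    exact (by decide : ∀ x : ZMod 5, 1 ≤ levVal x → lowVal x ≠ x) (v a) ha h2
  have hset : Finset.univ.filter (fun w => adj N 5 v w ∧ distO N 5 w < distO N 5 v)
      = (Finset.univ.filter (fun k => 1 ≤ lev N 5 v k)).image (fun k => lowV N v k) := by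
    ext w
    simp only [Finset.mem_filter, Finset.mem_univ, true_and, Finset.mem_image]
    constructor
    · rintro ⟨ha, hd⟩
      obtain ⟨k, hk | hk⟩ := (adj_iff v w).1 ha
      · have hdu := distO_update v k (v k + 1)
        rw [← hk, lev_eq v k] at hdu
        have h2 : levVal (v k + 1) < levVal (v k) := by omega
        obtain ⟨h3, h4⟩ := (by decide :
          ∀ a : ZMod 5, levVal (a+1) < levVal a → (1 ≤ levVal a ∧ a + 1 = lowVal a)) (v k) h2
        exact ⟨k, h3, by rw [hk, h4]; rfl⟩
      · have hdu := distO_update v k (v k - 1)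
        rw [← hk, lev_eq v k] at hdu
        have h2 : levVal (v k - 1) < levVal (v k) := by omega
        obtain ⟨h3, h4⟩ := (by decide :
          ∀ a : ZMod 5, levVal (a-1) < levVal a → (1 ≤ levVal a ∧ a - 1 = lowVal a)) (v k) h2
        exact ⟨k, h3, by rw [hk, h4]; rfl⟩
    · rintro ⟨k, hk, rfl⟩
      rw [lev_eq] at hk
      obtain ⟨hor, hlv⟩ := (by decide : ∀ a : ZMod 5, 1 ≤ levVal a →
          ((lowVal a = a + 1 ∨ lowVal a = a - 1) ∧ levVal (lowVal a) < levVal a)) (v k) hk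
      constructor
      · rw [adj_iff]
        rcases hor with h | h
        · exact ⟨k, Or.inl (by rw [lowV, h])⟩
        · exact ⟨k, Or.inr (by rw [lowV, h])⟩
      · have := distO_update v k (lowVal (v k))
        rw [lev_eq v k] at this
        rw [lowV]
        omega
  rw [hset, Finset.sum_image hinj]

lemma vmin_eq (w : Fin N → ZMod 5) (ν : Fin N) (h : lev N 5 w ν = 2) :
    vmin N w ν = lowV N w ν := by
  unfold vmin lowV
  exact congrArg (Function.update w ν) ((by decide : ∀ a : ZMod 5, levVal a = 2 →
    (if a.val = 2 then (1 : ZMod 5) else 4) = lowVal a) (w ν) h)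

lemma levVal_lowVal (a : ZMod 5) (h : 1 ≤ levVal a) :
    levVal (lowVal a) = levVal a - 1 :=
  (by decide : ∀ a : ZMod 5, 1 ≤ levVal a → levVal (lowVal a) = levVal a - 1) a h

lemma diag_eq (w : Fin N → ZMod 5) (k : Fin N) (hk : lev N 5 w k = 2) :
    lowV N (reflV N 5 k w) k = reflV N 5 k (lowV N w k) := by
  unfold lowV reflV
  simp only [Function.update_self, Function.update_idem]
  exact congrArg (Function.update w k)
    ((by decide : ∀ a : ZMod 5, levVal a = 2 → lowVal (-a) = -(lowVal a)) (w k) hk)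

lemma offdiag_eq (w : Fin N → ZMod 5) (k j : Fin N) (hkj : j ≠ k) :
    lowV N (reflV N 5 k w) j = reflV N 5 k (lowV N w j) := by
  unfold lowV reflV
  rw [Function.update_of_ne hkj, Function.update_of_ne (Ne.symm hkj)]
  exact Function.update_comm (Ne.symm hkj) _ _ _

lemma key0 {p : ℕ} (w : Fin N → ZMod 5) (j : Fin N)
    (hw1 : cardLev N 5 w 1 + 1 = p) (hj : lev N 5 w j = 1) :
    cardLev N 5 (lowV N w j) 1 ≠ p := by
  have e1 := cardLev_update w j (lowVal (w j)) 1
  have hco : 1 ≤ cardLev N 5 w 1 :=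
    Finset.card_pos.2 ⟨j, Finset.mem_filter.2 ⟨Finset.mem_univ j, hj⟩⟩
  have hl : levVal (lowVal (w j)) = 0 := by
    have := levVal_lowVal (w j) (by rw [← lev_eq w j]; omega)
    rw [← lev_eq w j] at this
    omega
  rw [if_pos hj, hl, if_neg (by omega)] at e1
  unfold lowV
  omega

end Helpers

/-- on `C_5^N`, for `f` supported in `Σ_{p,q}` (`p ≥ 1`), the
commutator `[A₀, B]` acts as the twisted outer adjacency:
`(A₀ (B f))(w) - (B (A₀ f))(w) = Σ_{ν : d_ν(w)=2} f((w_ν⁻)~_ν)`. -/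
theorem twisted_outer_adjacency_C5 (N p q : ℕ) (hN : 1 ≤ N) (hp : 1 ≤ p)
    (f : (Fin N → ZMod 5) → ℂ)
    (hf : ∀ v, ¬(cardLev N 5 v 1 = p ∧ cardLev N 5 v 2 = q) → f v = 0) :
    ∀ w, Azero N 5 (Bop N p q f) w - Bop N p q (Azero N 5 f) w
      = ∑ ν ∈ Finset.univ.filter (fun ν => lev N 5 w ν = 2),
          f (reflV N 5 ν (vmin N w ν)) := by
  classical
  intro w
  by_cases hw : cardLev N 5 w 1 + 1 = p ∧ cardLev N 5 w 2 = q + 1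
  · -- Main case: w ∈ Σ_{p-1,q+1}
    have hA : Azero N 5 (Bop N p q f) w
        = ∑ k ∈ Finset.univ.filter (fun k => lev N 5 w k = 2),
            ∑ j ∈ Finset.univ.filter (fun k => lev N 5 w k = 2),
              (if j = k then f (reflV N 5 k (lowV N w k))
                else f (reflV N 5 k (lowV N w j))) := by
      rw [Azero_eq]
      apply Finset.sum_congr rfl
      intro k hk
      have hk2 : lev N 5 w k = 2 := (Finset.mem_filter.1 hk).2
      simp only [Bop]
      rw [if_pos (by simp only [cardLev_reflV]; exact hw), Aplus_eq]
      rw [show Finset.univ.filter (fun j => 1 ≤ lev N 5 (reflV N 5 k w) j)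
          = Finset.univ.filter (fun j => 1 ≤ lev N 5 w j) from
        Finset.filter_congr fun j _ => by rw [lev_reflV]]
      have hsub : Finset.univ.filter (fun k => lev N 5 w k = 2)
          ⊆ Finset.univ.filter (fun j => 1 ≤ lev N 5 w j) := by
        intro j hj
        simp only [Finset.mem_filter, Finset.mem_univ, true_and] at hj ⊢
        omega
      have hzero : ∀ j ∈ Finset.univ.filter (fun j => 1 ≤ lev N 5 w j),
          j ∉ Finset.univ.filter (fun k => lev N 5 w k = 2) →
          f (lowV N (reflV N 5 k w) j) = 0 := by
        intro j hj hj2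
        simp only [Finset.mem_filter, Finset.mem_univ, true_and] at hj hj2
        have hj1 : lev N 5 w j = 1 := by
          have := lev_le2 w j
          omega
        have hjk : j ≠ k := by
          intro h; rw [h, hk2] at hj1; omega
        rw [offdiag_eq w k j hjk]
        apply hf
        rintro ⟨h1, -⟩
        rw [cardLev_reflV] at h1
        exact key0 w j hw.1 hj1 h1
      rw [← Finset.sum_subset hsub hzero]
      apply Finset.sum_congr rfl
      intro j hj
      have hj2 : lev N 5 w j = 2 := (Finset.mem_filter.1 hj).2
      by_cases h : j = k
      · subst h
        rw [if_pos rfl, diag_eq w j hj2]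
      · rw [if_neg h, offdiag_eq w k j h]
    have hB : Bop N p q (Azero N 5 f) w
        = ∑ k ∈ Finset.univ.filter (fun k => lev N 5 w k = 2),
            ∑ j ∈ Finset.univ.filter (fun k => lev N 5 w k = 2),
              (if k = j then 0 else f (reflV N 5 k (lowV N w j))) := by
      simp only [Bop]
      rw [if_pos hw, Aplus_eq]
      have hsub : Finset.univ.filter (fun k => lev N 5 w k = 2)
          ⊆ Finset.univ.filter (fun j => 1 ≤ lev N 5 w j) := by
        intro j hj
        simp only [Finset.mem_filter, Finset.mem_univ, true_and] at hj ⊢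
        omega
      have hzero : ∀ j ∈ Finset.univ.filter (fun j => 1 ≤ lev N 5 w j),
          j ∉ Finset.univ.filter (fun k => lev N 5 w k = 2) →
          Azero N 5 f (lowV N w j) = 0 := by
        intro j hj hj2
        simp only [Finset.mem_filter, Finset.mem_univ, true_and] at hj hj2
        have hj1 : lev N 5 w j = 1 := by
          have := lev_le2 w j
          omega
        rw [Azero_eq]
        apply Finset.sum_eq_zero
        intro x hx
        apply hf
        rintro ⟨h1, -⟩
        rw [cardLev_reflV] at h1
        exact key0 w j hw.1 hj1 h1
      rw [← Finset.sum_subset hsub hzero]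
      rw [show ∑ j ∈ Finset.univ.filter (fun k => lev N 5 w k = 2),
            Azero N 5 f (lowV N w j)
          = ∑ j ∈ Finset.univ.filter (fun k => lev N 5 w k = 2),
            ∑ x ∈ Finset.univ.filter (fun k => lev N 5 w k = 2),
              (if x = j then 0 else f (reflV N 5 x (lowV N w j))) from ?_,
        Finset.sum_comm]
      apply Finset.sum_congr rfl
      intro j hj
      have hj2 : lev N 5 w j = 2 := (Finset.mem_filter.1 hj).2
      rw [Azero_eq]
      have hfe : Finset.univ.filter (fun x => lev N 5 (lowV N w j) x = 2)
          = (Finset.univ.filter (fun k => lev N 5 w k = 2)).erase j := by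
        have hll : levVal (lowVal (w j)) = 1 := by
          have := levVal_lowVal (w j) (by rw [← lev_eq w j]; omega)
          rw [← lev_eq w j] at this
          omega
        ext x
        simp only [Finset.mem_filter, Finset.mem_univ, true_and, Finset.mem_erase]
        rw [lowV, lev_update]
        by_cases h : x = j
        · subst h
          simp [hll]
        · simp [h]
      rw [hfe]
      rw [show ∑ x ∈ Finset.univ.filter (fun k => lev N 5 w k = 2),
            (if x = j then 0 else f (reflV N 5 x (lowV N w j)))
          = ∑ x ∈ (Finset.univ.filter (fun k => lev N 5 w k = 2)).erase j,
            (if x = j then 0 else f (reflV N 5 x (lowV N w j))) from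
        (Finset.sum_erase _ (by simp)).symm]
      apply Finset.sum_congr rfl
      intro x hx
      rw [if_neg (Finset.ne_of_mem_erase hx)]
    rw [hA, hB, ← Finset.sum_sub_distrib]
    apply Finset.sum_congr rfl
    intro k hk
    have hk2 : lev N 5 w k = 2 := (Finset.mem_filter.1 hk).2
    rw [← Finset.sum_sub_distrib]
    rw [Finset.sum_congr rfl (show ∀ j ∈ Finset.univ.filter (fun k => lev N 5 w k = 2),
        ((if j = k then f (reflV N 5 k (lowV N w k))
            else f (reflV N 5 k (lowV N w j)))
          - (if k = j then 0 else f (reflV N 5 k (lowV N w j))))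
        = (if j = k then f (reflV N 5 k (lowV N w k)) else 0) from ?_)]
    · rw [Finset.sum_ite_eq' (Finset.univ.filter (fun k => lev N 5 w k = 2)) k
        (fun _ => f (reflV N 5 k (lowV N w k))), if_pos hk, vmin_eq w k hk2]
    · intro j hj
      by_cases h : j = k
      · subst h; rw [if_pos rfl, if_pos rfl, if_pos rfl, sub_zero]
      · rw [if_neg h, if_neg (Ne.symm h), if_neg h, sub_self]
  · -- Degenerate case: w ∉ Σ_{p-1,q+1}; both sides vanish
    have h1 : Azero N 5 (Bop N p q f) w = 0 := by
      rw [Azero_eq]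
      apply Finset.sum_eq_zero
      intro k hk
      simp only [Bop]
      rw [if_neg (by simp only [cardLev_reflV]; exact hw)]
    have h2 : Bop N p q (Azero N 5 f) w = 0 := by
      simp only [Bop]
      rw [if_neg hw]
    rw [h1, h2, sub_zero]
    symm
    apply Finset.sum_eq_zero
    intro ν hν
    have hlev : lev N 5 w ν = 2 := (Finset.mem_filter.1 hν).2
    rw [vmin_eq w ν hlev]
    apply hf
    rintro ⟨ha, hb⟩
    rw [cardLev_reflV] at ha hb
    apply hw
    have e1 := cardLev_update w ν (lowVal (w ν)) 1
    have e2 := cardLev_update w ν (lowVal (w ν)) 2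
    have hll : levVal (lowVal (w ν)) = 1 := by
      have := levVal_lowVal (w ν) (by rw [← lev_eq w ν]; omega)
      rw [← lev_eq w ν] at this
      omega
    rw [hlev, hll, if_neg (by omega), if_pos rfl] at e1
    rw [hlev, hll, if_pos rfl, if_neg (by omega)] at e2
    unfold lowV at ha hb
    constructor <;> omega
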